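/- Let b ≥ 0 and (a, b)^T ∈ Z². Let ℓ ∈ ℕ be the minimal natural number satisfying ℓ ≡ a - b(b-1)/2 (mod 2) and -ℓ² ≤ a - b(b-1)/2 ≤ ℓ² + 2bℓ. Then the shortest representation of (a, b)^T in base M = [[1,1],[0,1]] over the digit set {(0,1)^T, (0,-1)^T} has length b + 2ℓ. -/

import Mathlib

/-- The Jordan block `[[1,1],[0,1]]`. -/
def M1 : Matrix (Fin 2) (Fin 2) ℤ := !![1, 1; 0, 1]

/-- The digit `p = (0,1)ᵀ`. -/
def pd : Fin 2 → ℤ := ![0, 1]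

/-- The digit `m = (0,-1)ᵀ`. -/
def md : Fin 2 → ℤ := ![0, -1]

/-- The vector represented by the word `d_{k-1} … d_0`, namely `∑ M^i d_i`. -/
def val1 {k : ℕ} (d : Fin k → (Fin 2 → ℤ)) : Fin 2 → ℤ :=
  ∑ i : Fin k, (M1 ^ (i : ℕ)).mulVec (d i)

lemma M1_pow (i : ℕ) : M1 ^ i = !![1, (i:ℤ); 0, 1] := by
  induction i with
  | zero => rw [pow_zero, Matrix.one_fin_two]; norm_num
  | succ n ih =>
      rw [pow_succ, ih, M1, Matrix.mul_fin_two]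
      push_cast
      ring_nf

lemma mulVec01 (i : ℕ) (c : ℤ) : (M1 ^ i).mulVec ![0, c] = ![(i:ℤ) * c, c] := by
  rw [M1_pow]
  funext j
  fin_cases j <;>
    simp [Matrix.mulVec, dotProduct, Fin.sum_univ_two]

lemma valV {k : ℕ} (ε : Fin k → ℤ) :
    val1 (fun i => ![0, ε i]) = ![∑ i : Fin k, ((i:ℕ):ℤ) * ε i, ∑ i : Fin k, ε i] := by
  unfold val1
  funext j
  rw [Finset.sum_apply]
  simp only [mulVec01]
  fin_cases j <;> simp [mulVec01]

lemma sum_fin (k : ℕ) : 2 * (∑ i : Fin k, ((i:ℕ):ℤ)) = (k:ℤ) * ((k:ℤ) - 1) := by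
  induction k with
  | zero => simp
  | succ n ih =>
      rw [Fin.sum_univ_castSucc]
      simp only [Fin.coe_castSucc, Fin.val_last]
      push_cast
      push_cast at ih
      linarith

lemma exists_signs : ∀ (k n : ℕ) (S : ℤ), n ≤ k →
    (n:ℤ) * ((n:ℤ) - 1) ≤ 2 * S → 2 * S ≤ (n:ℤ) * (2*(k:ℤ) - (n:ℤ) - 1) →
    ∃ ε : Fin k → ℤ, (∀ i, ε i = 1 ∨ ε i = -1) ∧
      (∑ i, ε i) = (k:ℤ) - 2*(n:ℤ) ∧
      (∑ i : Fin k, ((i:ℕ):ℤ) * ε i) = (∑ i : Fin k, ((i:ℕ):ℤ)) - 2*S := by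
  intro k
  induction k with
  | zero =>
      intro n S hn h1 h2
      interval_cases n
      have hS : S = 0 := by push_cast at h1 h2; omega
      subst hS
      exact ⟨Fin.elim0, fun i => i.elim0, by simp, by simp⟩
  | succ k ih =>
      intro n S hn h1 h2
      have hev : ∃ t : ℤ, (n:ℤ) * (2*(k:ℤ) - (n:ℤ) - 1) = 2 * t := by
        rcases Nat.even_or_odd n with ⟨r, hr⟩ | ⟨r, hr⟩
        · subst hr; exact ⟨r * (2*(k:ℤ) - (r+r:ℕ) - 1), by push_cast; ring⟩
        · subst hr; exact ⟨(2*(r:ℤ)+1) * ((k:ℤ) - (r:ℤ) - 1), by push_cast; ring⟩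
      by_cases hc : n ≤ k ∧ 2 * S ≤ (n:ℤ) * (2*(k:ℤ) - (n:ℤ) - 1)
      · obtain ⟨ε', hd, hs1, hs2⟩ := ih n S hc.1 h1 hc.2
        refine ⟨Fin.snoc ε' 1, ?_, ?_, ?_⟩
        · intro i
          refine Fin.lastCases ?_ (fun j => ?_) i
          · left; simp
          · simpa using hd j
        · rw [Fin.sum_univ_castSucc]
          simp only [Fin.snoc_castSucc, Fin.snoc_last]
          rw [hs1]; push_cast; ring
        · rw [Fin.sum_univ_castSucc, Fin.sum_univ_castSucc (f := fun i : Fin (k+1) => ((i:ℕ):ℤ))]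
          simp only [Fin.snoc_castSucc, Fin.snoc_last, Fin.coe_castSucc, Fin.val_last]
          rw [hs2]; push_cast; ring
      · have hn1 : 1 ≤ n := by
          by_contra h
          have hn0 : n = 0 := by omega
          subst hn0
          push_neg at hc
          have := hc (Nat.zero_le k)
          simp at this h2
          linarith
        have hnk : n - 1 ≤ k := by omega
        have hlow : ((n:ℤ) - 1) * ((n:ℤ) - 2) ≤ 2 * (S - k) := by
          rcases Nat.lt_or_ge k n with hkn | hkn
          · have hn' : n = k + 1 := by omega
            subst hn'
            push_cast at h1 h2 ⊢
            nlinarith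
          · push_neg at hc
            have h3 := hc hkn
            obtain ⟨t, ht⟩ := hev
            rw [ht] at h3
            have h4 : 2 * S ≥ 2 * t + 2 := by omega
            have hfac : ((n:ℤ) - 1) * ((k:ℤ) - (n:ℤ)) ≥ 0 := by
              apply mul_nonneg <;> push_cast <;> omega
            nlinarith [ht, h4, hfac]
        have hhigh : 2 * (S - k) ≤ ((n:ℤ) - 1) * (2*(k:ℤ) - ((n:ℤ) - 1) - 1) := by
          push_cast at h2
          nlinarith
        have hcast : (((n - 1 : ℕ)):ℤ) = (n:ℤ) - 1 := by push_cast [hn1]; ring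
        obtain ⟨ε', hd, hs1, hs2⟩ := ih (n-1) (S - k) hnk (by rw [hcast]; linarith [hlow])
          (by rw [hcast]; linarith [hhigh])
        refine ⟨Fin.snoc ε' (-1), ?_, ?_, ?_⟩
        · intro i
          refine Fin.lastCases ?_ (fun j => ?_) i
          · right; simp
          · simpa using hd j
        · rw [Fin.sum_univ_castSucc]
          simp only [Fin.snoc_castSucc, Fin.snoc_last]
          rw [hs1, hcast]; push_cast; ring
        · rw [Fin.sum_univ_castSucc, Fin.sum_univ_castSucc (f := fun i : Fin (k+1) => ((i:ℕ):ℤ))]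
          simp only [Fin.snoc_castSucc, Fin.snoc_last, Fin.coe_castSucc, Fin.val_last]
          rw [hs2]; push_cast; ring

lemma signs_bounds : ∀ (k : ℕ) (ε : Fin k → ℤ), (∀ i, ε i = 1 ∨ ε i = -1) →
    ∃ n : ℕ, n ≤ k ∧ ∃ S : ℤ,
      (∑ i, ε i) = (k:ℤ) - 2*(n:ℤ) ∧
      (∑ i : Fin k, ((i:ℕ):ℤ) * ε i) = (∑ i : Fin k, ((i:ℕ):ℤ)) - 2*S ∧
      (n:ℤ)*((n:ℤ)-1) ≤ 2*S ∧ 2*S ≤ (n:ℤ)*(2*(k:ℤ)-(n:ℤ)-1) := by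
  intro k
  induction k with
  | zero =>
      intro ε hd
      exact ⟨0, le_refl 0, 0, by simp, by simp, by simp, by simp⟩
  | succ k ih =>
      intro ε hd
      obtain ⟨n, hn, S, hs1, hs2, hb1, hb2⟩ :=
        ih (fun i => ε i.castSucc) (fun i => hd i.castSucc)
      rcases hd (Fin.last k) with h1 | h1
      · refine ⟨n, by omega, S, ?_, ?_, hb1, ?_⟩
        · rw [Fin.sum_univ_castSucc, h1, hs1]; push_cast; ring
        · rw [Fin.sum_univ_castSucc, Fin.sum_univ_castSucc (f := fun i : Fin (k+1) => ((i:ℕ):ℤ))]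
          simp only [Fin.coe_castSucc, Fin.val_last]
          rw [h1, hs2]; push_cast; ring
        · have : (0:ℤ) ≤ 2 * (n:ℤ) := by positivity
          push_cast; nlinarith
      · refine ⟨n + 1, by omega, S + k, ?_, ?_, ?_, ?_⟩
        · rw [Fin.sum_univ_castSucc, h1, hs1]; push_cast; ring
        · rw [Fin.sum_univ_castSucc, Fin.sum_univ_castSucc (f := fun i : Fin (k+1) => ((i:ℕ):ℤ))]
          simp only [Fin.coe_castSucc, Fin.val_last]
          rw [h1, hs2]; push_cast; ring
        · have hnk : (n:ℤ) ≤ k := by exact_mod_cast hn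
          push_cast; nlinarith
        · push_cast; nlinarith

theorem stmt7 (b : ℕ) (a : ℤ) (ℓ : ℕ)
    (hℓ : IsLeast {l : ℕ |
        (a - (b : ℤ) * ((b : ℤ) - 1) / 2) % 2 = (l : ℤ) % 2 ∧
        -(l : ℤ) ^ 2 ≤ a - (b : ℤ) * ((b : ℤ) - 1) / 2 ∧
        a - (b : ℤ) * ((b : ℤ) - 1) / 2 ≤ (l : ℤ) ^ 2 + 2 * (b : ℤ) * (l : ℤ)} ℓ) :
    IsLeast {k : ℕ | ∃ d : Fin k → (Fin 2 → ℤ),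
        (∀ i, d i = pd ∨ d i = md) ∧ val1 d = ![a, (b : ℤ)]} (b + 2 * ℓ) := by
  obtain ⟨c, hc⟩ : ∃ c : ℤ, a - (b : ℤ) * ((b : ℤ) - 1) / 2 = c := ⟨_, rfl⟩
  have hdvd : (2:ℤ) ∣ (b:ℤ) * ((b:ℤ) - 1) := by
    rcases Int.even_or_odd (b:ℤ) with ⟨r, hr⟩ | ⟨r, hr⟩
    · exact ⟨r * ((b:ℤ) - 1), by rw [hr]; ring⟩
    · exact ⟨(b:ℤ) * r, by rw [hr]; ring⟩
  have h2c : 2 * c = 2 * a - (b:ℤ) * ((b:ℤ) - 1) := by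
    have h := Int.mul_ediv_cancel' hdvd
    rw [← hc]; linarith
  obtain ⟨⟨hp1, hp2, hp3⟩, hmin⟩ := hℓ
  rw [hc] at hp1 hp2 hp3
  constructor
  · -- membership: construct a representation of length b + 2ℓ
    obtain ⟨t, ht⟩ : ∃ t : ℤ, (ℓ:ℤ) + c = 2 * t := by
      refine ⟨((ℓ:ℤ) + c) / 2, ?_⟩
      omega
    set k := b + 2 * ℓ with hk
    have hkz : (k:ℤ) = (b:ℤ) + 2 * (ℓ:ℤ) := by push_cast [hk]; ring
    obtain ⟨ε, hd, hs1, hs2⟩ :=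
      exists_signs k ℓ ((ℓ:ℤ) * (b:ℤ) + (ℓ:ℤ)^2 - t) (by omega)
        (by nlinarith [hp3, ht]) (by rw [hkz]; nlinarith [hp2, ht])
    refine ⟨fun i => ![0, ε i], ?_, ?_⟩
    · intro i
      rcases hd i with h | h
      · left; simp only [h]; rfl
      · right; simp only [h]; rfl
    · rw [valV]
      have hsum := sum_fin k
      obtain ⟨X, hX⟩ : ∃ x : ℤ, (∑ i : Fin k, ((i:ℕ):ℤ)) = x := ⟨_, rfl⟩
      rw [hX] at hsum hs2
      rw [hkz] at hsum
      have ha : (∑ i : Fin k, ((i:ℕ):ℤ) * ε i) = a := by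
        rw [hs2]
        nlinarith [hsum, h2c, ht]
      have hb : (∑ i : Fin k, ε i) = (b:ℤ) := by rw [hs1, hkz]; ring
      rw [ha, hb]
  · -- minimality
    rintro k' ⟨d, hd, hv⟩
    have hde : ∀ i, d i = ![0, d i 1] := by
      intro i
      rcases hd i with h | h <;> rw [h] <;> rfl
    rw [show d = (fun i => ![0, d i 1]) from funext hde, valV] at hv
    have ha : (∑ i : Fin k', ((i:ℕ):ℤ) * d i 1) = a := by
      have := congrFun hv 0; simpa using this
    have hb : (∑ i : Fin k', d i 1) = (b:ℤ) := by
      have := congrFun hv 1; simpa using this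
    have hdd : ∀ i, d i 1 = 1 ∨ d i 1 = -1 := by
      intro i
      rcases hd i with h | h <;> rw [h]
      · left; rfl
      · right; rfl
    obtain ⟨n, hn, S, hs1, hs2, hb1, hb2⟩ := signs_bounds k' (fun i => d i 1) hdd
    have hk'z : (k':ℤ) = (b:ℤ) + 2 * (n:ℤ) := by
      rw [hb] at hs1; linarith [hs1]
    have hk' : k' = b + 2 * n := by exact_mod_cast hk'z
    have hsum := sum_fin k'
    rw [ha] at hs2
    obtain ⟨X, hX⟩ : ∃ x : ℤ, (∑ i : Fin k', ((i:ℕ):ℤ)) = x := ⟨_, rfl⟩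
    rw [hX] at hsum hs2
    rw [hk'z] at hsum
    have hc2 : c = 2*(n:ℤ)*(b:ℤ) + 2*(n:ℤ)^2 - (n:ℤ) - 2*S := by linarith only [hsum, hs2, h2c]
    have hmem : n ∈ {l : ℕ |
        (a - (b : ℤ) * ((b : ℤ) - 1) / 2) % 2 = (l : ℤ) % 2 ∧
        -(l : ℤ) ^ 2 ≤ a - (b : ℤ) * ((b : ℤ) - 1) / 2 ∧
        a - (b : ℤ) * ((b : ℤ) - 1) / 2 ≤ (l : ℤ) ^ 2 + 2 * (b : ℤ) * (l : ℤ)} := by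
      refine ⟨?_, ?_, ?_⟩ <;> rw [hc]
      · obtain ⟨u, hu⟩ : ∃ u : ℤ, c + (n:ℤ) = 2 * u :=
          ⟨(n:ℤ)*(b:ℤ) + (n:ℤ)^2 - S, by linarith only [hc2]⟩
        omega
      · rw [hk'z] at hb2
        linarith only [hb2, hc2]
      · linarith only [hb1, hc2]
    have := hmin hmem
    omega
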